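/- Assume that for each T > 0 and t ≥ T the map (ξ₁,ξ₂) ↦ l(t−T,t,ξ₁,ξ₂,u) is twice continuously differentiable. If there exists T > 0 such that the Observability Grammian C(t,T,x(t−T),u) is positive definite for all t ≥ T, then u is weakly persistent at x₀. Conversely, if u is weakly persistent at x₀ and all the associated K-functions κ_t can be chosen with finite sensitivity, then there exists T > 0 such that C(t,T,x(t−T),u) is positive definite for all t ≥ T. -/

import Mathlib

open MeasureTheory Metric Set Filter

/-- State space `ℝ^n` with the Euclidean norm. -/
abbrev Vec (n : ℕ) := EuclideanSpace ℝ (Fin n)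

/-- Cumulative output error
`l(t₁,t₂,ξ₁,ξ₂,u) = ∫_{t₁}^{t₂} ‖h(φ(s;t₁,ξ₁,u),u(s)) − h(φ(s;t₁,ξ₂,u),u(s))‖² ds`. -/
noncomputable def cumError {nx nu ny : ℕ}
    (h : Vec nx → Vec nu → Vec ny) (φ : ℝ → ℝ → Vec nx → Vec nx)
    (u : ℝ → Vec nu) (t₁ t₂ : ℝ) (ξ₁ ξ₂ : Vec nx) : ℝ :=
  ∫ s in t₁..t₂, ‖h (φ s t₁ ξ₁) (u s) - h (φ s t₁ ξ₂) (u s)‖ ^ 2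

/-- A `𝒦`-function: continuous, strictly increasing on `[0,∞)`, vanishing at `0`. -/
def IsKFunction (κ : ℝ → ℝ) : Prop :=
  ContinuousOn κ (Set.Ici 0) ∧ StrictMonoOn κ (Set.Ici 0) ∧ κ 0 = 0

/-- Weakly persistent input trajectory at `x₀`. -/
def WeaklyPersistentAt {nx nu ny : ℕ}
    (h : Vec nx → Vec nu → Vec ny) (φ : ℝ → ℝ → Vec nx → Vec nx)
    (u : ℝ → Vec nu) (x₀ : Vec nx) : Prop :=
  ∃ T > (0 : ℝ), ∀ t ≥ T, ∃ R > (0 : ℝ), ∃ κ : ℝ → ℝ, IsKFunction κ ∧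
    ∀ ξ₁ ∈ Metric.closedBall (φ (t - T) 0 x₀) R,
      ∀ ξ₂ ∈ Metric.closedBall (φ (t - T) 0 x₀) R,
        κ ‖ξ₁ - ξ₂‖ ≤ cumError h φ u (t - T) t ξ₁ ξ₂

/-- A `𝒦`-function with finite sensitivity: `inf{κ(s)/s² : 0 < s ≤ r} > 0` for some `r > 0`. -/
def FiniteSensitivity (κ : ℝ → ℝ) : Prop :=
  ∃ r > (0 : ℝ), ∃ c > (0 : ℝ), ∀ s : ℝ, 0 < s → s ≤ r → c ≤ κ s / s ^ 2

/-- Weakly persistent input trajectory at `x₀` with all associated `𝒦`-functions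
of finite sensitivity. -/
def WeaklyPersistentAtFS {nx nu ny : ℕ}
    (h : Vec nx → Vec nu → Vec ny) (φ : ℝ → ℝ → Vec nx → Vec nx)
    (u : ℝ → Vec nu) (x₀ : Vec nx) : Prop :=
  ∃ T > (0 : ℝ), ∀ t ≥ T, ∃ R > (0 : ℝ), ∃ κ : ℝ → ℝ,
    IsKFunction κ ∧ FiniteSensitivity κ ∧
    ∀ ξ₁ ∈ Metric.closedBall (φ (t - T) 0 x₀) R,
      ∀ ξ₂ ∈ Metric.closedBall (φ (t - T) 0 x₀) R,
        κ ‖ξ₁ - ξ₂‖ ≤ cumError h φ u (t - T) t ξ₁ ξ₂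

/-- Second Fréchet derivative of `ξ ↦ l(t₁,t₂,ξ₁,ξ,u)` at `ξ₂`, as a bilinear form. -/
noncomputable def d2l {nx nu ny : ℕ}
    (h : Vec nx → Vec nu → Vec ny) (φ : ℝ → ℝ → Vec nx → Vec nx)
    (u : ℝ → Vec nu) (t₁ t₂ : ℝ) (ξ₁ ξ₂ v w : Vec nx) : ℝ :=
  iteratedFDeriv ℝ 2 (fun ξ => cumError h φ u t₁ t₂ ξ₁ ξ) ξ₂ ![v, w]

/-- Observability Grammian as a bilinear form. -/
noncomputable def grammian {nx nu ny : ℕ}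
    (h : Vec nx → Vec nu → Vec ny) (φ : ℝ → ℝ → Vec nx → Vec nx)
    (u : ℝ → Vec nu) (x₀ : Vec nx) (t T : ℝ) (v w : Vec nx) : ℝ :=
  (1 / 2) * d2l h φ u (t - T) t (φ (t - T) 0 x₀) (φ (t - T) 0 x₀) v w


section AuxLemmas

open ContinuousLinearMap in
lemma curve_deriv1' {X : Type*} [NormedAddCommGroup X] [NormedSpace ℝ X]
    (Ψ : X → ℝ) (hΨ : ContDiff ℝ 2 Ψ) (p w : X) (s : ℝ) :
    HasDerivAt (fun s : ℝ => Ψ (p + s • w)) (fderiv ℝ Ψ (p + s • w) w) s := by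
  have hc : HasDerivAt (fun s : ℝ => p + s • w) w s := by
    simpa using ((hasDerivAt_id s).smul_const w).const_add p
  have hΨd : HasFDerivAt Ψ (fderiv ℝ Ψ (p + s • w)) (p + s • w) :=
    (hΨ.differentiable two_ne_zero _).hasFDerivAt
  exact hΨd.comp_hasDerivAt s hc

lemma curve_deriv2' {X : Type*} [NormedAddCommGroup X] [NormedSpace ℝ X]
    (Ψ : X → ℝ) (hΨ : ContDiff ℝ 2 Ψ) (p w : X) (s : ℝ) :
    HasDerivAt (fun s : ℝ => fderiv ℝ Ψ (p + s • w) w)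
      (fderiv ℝ (fderiv ℝ Ψ) (p + s • w) w w) s := by
  have hc : HasDerivAt (fun s : ℝ => p + s • w) w s := by
    simpa using ((hasDerivAt_id s).smul_const w).const_add p
  have h1 : ContDiff ℝ 1 (fderiv ℝ Ψ) := hΨ.fderiv_right (le_refl 2)
  have hd : HasFDerivAt (fderiv ℝ Ψ) (fderiv ℝ (fderiv ℝ Ψ) (p + s • w)) (p + s • w) :=
    (h1.differentiable one_ne_zero _).hasFDerivAt
  have h3 := hd.comp_hasDerivAt s hc
  have := h3.clm_apply (hasDerivAt_const s w)
  simpa using this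

lemma curve_cont2' {X : Type*} [NormedAddCommGroup X] [NormedSpace ℝ X]
    (Ψ : X → ℝ) (hΨ : ContDiff ℝ 2 Ψ) (p w : X) :
    Continuous (fun s : ℝ => fderiv ℝ (fderiv ℝ Ψ) (p + s • w) w w) := by
  have h1 : ContDiff ℝ 1 (fderiv ℝ Ψ) := hΨ.fderiv_right (le_refl 2)
  have h2 : Continuous (fderiv ℝ (fderiv ℝ Ψ)) := h1.continuous_fderiv one_ne_zero
  have hc : Continuous fun s : ℝ => p + s • w := by continuity
  exact ((h2.comp hc).clm_apply continuous_const).clm_apply continuous_const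

lemma deriv_zero_of_min' {g g₁ : ℝ → ℝ} (hg : ∀ s, HasDerivAt g (g₁ s) s)
    (h0 : g 0 = 0) (hnn : ∀ s, 0 ≤ g s) : g₁ 0 = 0 := by
  have hmin : IsLocalMin g 0 := Filter.Eventually.of_forall fun s => by
    rw [h0]; exact hnn s
  rw [← (hg 0).deriv]
  exact hmin.deriv_eq_zero

lemma quad_lower_bound' {g g₁ g₂ : ℝ → ℝ} (hg : ∀ s, HasDerivAt g (g₁ s) s)
    (hg₁ : ∀ s, HasDerivAt g₁ (g₂ s) s) (h0 : g 0 = 0) (h1 : g₁ 0 = 0)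
    {m b : ℝ} (hb : 0 ≤ b) (hm : ∀ s ∈ Set.Icc (0:ℝ) b, m ≤ g₂ s) :
    m / 2 * b ^ 2 ≤ g b := by
  have hφd : ∀ s, HasDerivAt (fun s => g₁ s - m * s) (g₂ s - m) s := fun s =>
    (hg₁ s).sub (by simpa using (hasDerivAt_id s).const_mul m)
  have hφmono : MonotoneOn (fun s => g₁ s - m * s) (Set.Icc 0 b) := by
    apply monotoneOn_of_deriv_nonneg (convex_Icc 0 b)
      (fun s _ => ((hφd s).continuousAt).continuousWithinAt)
      (fun s _ => ((hφd s).differentiableAt).differentiableWithinAt)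
    intro s hs
    rw [interior_Icc] at hs
    rw [(hφd s).deriv]
    have := hm s ⟨hs.1.le, hs.2.le⟩
    linarith
  have hφnn : ∀ s ∈ Set.Icc (0:ℝ) b, 0 ≤ g₁ s - m * s := by
    intro s hs
    have := hφmono (Set.left_mem_Icc.mpr hb) hs hs.1
    simpa [h1] using this
  have hψd : ∀ s, HasDerivAt (fun s => g s - m / 2 * s ^ 2) (g₁ s - m * s) s := by
    intro s
    have hp : HasDerivAt (fun s : ℝ => m / 2 * s ^ 2) (m / 2 * (2 * s ^ 1)) s :=
      (hasDerivAt_pow 2 s).const_mul (m / 2)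
    have := (hg s).sub hp
    refine this.congr_deriv ?_
    ring
  have hψmono : MonotoneOn (fun s => g s - m / 2 * s ^ 2) (Set.Icc 0 b) := by
    apply monotoneOn_of_deriv_nonneg (convex_Icc 0 b)
      (fun s _ => ((hψd s).continuousAt).continuousWithinAt)
      (fun s _ => ((hψd s).differentiableAt).differentiableWithinAt)
    intro s hs
    rw [interior_Icc] at hs
    rw [(hψd s).deriv]
    exact hφnn s ⟨hs.1.le, hs.2.le⟩
  have := hψmono (Set.left_mem_Icc.mpr hb) (Set.right_mem_Icc.mpr hb) hb
  simp only [h0] at this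
  linarith

lemma quad_upper_bound' {g g₁ g₂ : ℝ → ℝ} (hg : ∀ s, HasDerivAt g (g₁ s) s)
    (hg₁ : ∀ s, HasDerivAt g₁ (g₂ s) s) (h0 : g 0 = 0) (h1 : g₁ 0 = 0)
    {M b : ℝ} (hb : 0 ≤ b) (hM : ∀ s ∈ Set.Icc (0:ℝ) b, g₂ s ≤ M) :
    g b ≤ M / 2 * b ^ 2 := by
  have := quad_lower_bound' (g := fun s => -g s) (g₁ := fun s => -g₁ s) (g₂ := fun s => -g₂ s)
    (fun s => (hg s).neg) (fun s => (hg₁ s).neg) (by simp [h0]) (by simp [h1])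
    (m := -M) hb (fun s hs => by simpa using neg_le_neg (hM s hs))
  linarith [this]

lemma cumError_nonneg' {nx nu ny : ℕ} (h : Vec nx → Vec nu → Vec ny)
    (φ : ℝ → ℝ → Vec nx → Vec nx)
    (u : ℝ → Vec nu) {t₁ t₂ : ℝ} (hle : t₁ ≤ t₂) (ξ₁ ξ₂ : Vec nx) :
    0 ≤ cumError h φ u t₁ t₂ ξ₁ ξ₂ :=
  intervalIntegral.integral_nonneg hle (fun s _ => by positivity)

lemma cumError_self' {nx nu ny : ℕ} (h : Vec nx → Vec nu → Vec ny)
    (φ : ℝ → ℝ → Vec nx → Vec nx)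
    (u : ℝ → Vec nu) (t₁ t₂ : ℝ) (ξ : Vec nx) :
    cumError h φ u t₁ t₂ ξ ξ = 0 := by
  simp [cumError]

lemma prod_line_eq' {nx : ℕ} (ξ v : Vec nx) (s : ℝ) :
    ((ξ, ξ) : Vec nx × Vec nx) + s • ((0 : Vec nx), v) = (ξ, ξ + s • v) := by
  simp [Prod.ext_iff]

lemma grammian_eq' {nx nu ny : ℕ} (h : Vec nx → Vec nu → Vec ny)
    (φ : ℝ → ℝ → Vec nx → Vec nx)
    (u : ℝ → Vec nu) (t₁ t₂ : ℝ)
    (hF : ContDiff ℝ 2 (fun p : Vec nx × Vec nx => cumError h φ u t₁ t₂ p.1 p.2))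
    (ξ v : Vec nx) :
    d2l h φ u t₁ t₂ ξ ξ v v =
      fderiv ℝ (fderiv ℝ (fun p : Vec nx × Vec nx => cumError h φ u t₁ t₂ p.1 p.2)) (ξ, ξ)
        ((0 : Vec nx), v) ((0 : Vec nx), v) := by
  set F := fun p : Vec nx × Vec nx => cumError h φ u t₁ t₂ p.1 p.2 with hFdef
  have hmk : ContDiff ℝ 2 (fun x : Vec nx => ((ξ, x) : Vec nx × Vec nx)) :=
    contDiff_const.prodMk contDiff_id
  have hG : ContDiff ℝ 2 (fun x : Vec nx => F (ξ, x)) := hF.comp hmk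
  have hGF : (fun x : Vec nx => cumError h φ u t₁ t₂ ξ x) = (fun x : Vec nx => F (ξ, x)) := by
    funext x; rw [hFdef]
  rw [d2l, iteratedFDeriv_two_apply, hGF]
  simp only [Matrix.cons_val_zero, Matrix.cons_val_one, Matrix.head_cons]
  set G := fun x : Vec nx => F (ξ, x) with hGdef
  have hfun : (fun s : ℝ => G (ξ + s • v)) = fun s : ℝ => F ((ξ, ξ) + s • ((0 : Vec nx), v)) := by
    funext s
    rw [prod_line_eq']
  have hder : (fun s : ℝ => fderiv ℝ G (ξ + s • v) v)
      = fun s : ℝ => fderiv ℝ F ((ξ, ξ) + s • ((0 : Vec nx), v)) ((0 : Vec nx), v) := by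
    funext s
    have h1 := (curve_deriv1' G hG ξ v s).deriv
    have h2 := (curve_deriv1' F hF (ξ, ξ) ((0 : Vec nx), v) s).deriv
    rw [hfun] at h1
    rw [← h1]
    exact h2
  have hd2G := curve_deriv2' G hG ξ v 0
  have hd2F := curve_deriv2' F hF (ξ, ξ) ((0 : Vec nx), v) 0
  rw [hder] at hd2G
  have huniq := hd2F.unique hd2G
  simp only [zero_smul, add_zero] at huniq
  exact huniq.symm

end AuxLemmas

set_option maxHeartbeats 4000000 in
/-- positive definiteness of the Observability Grammian implies weak
persistence; conversely, weak persistence with finite-sensitivity `𝒦`-functions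
implies positive definiteness of the Grammian. -/
theorem stmt7 {nx nu ny : ℕ}
    (f : Vec nx → Vec nu → Vec nx) (h : Vec nx → Vec nu → Vec ny)
    (u : ℝ → Vec nu) (φ : ℝ → ℝ → Vec nx → Vec nx) (x₀ : Vec nx)
    (hf : ContDiff ℝ 2 (Function.uncurry f))
    (hh : ContDiff ℝ 2 (Function.uncurry h))
    (hflow_init : ∀ s₁ : ℝ, 0 ≤ s₁ → ∀ ξ, φ s₁ s₁ ξ = ξ)
    (hflow_ode : ∀ s₁ s : ℝ, 0 ≤ s₁ → s₁ ≤ s → ∀ ξ,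
      HasDerivAt (fun τ => φ τ s₁ ξ) (f (φ s s₁ ξ) (u s)) s)
    (hC2 : ∀ T > (0 : ℝ), ∀ t ≥ T,
      ContDiff ℝ 2 (fun p : Vec nx × Vec nx => cumError h φ u (t - T) t p.1 p.2)) :
    ((∃ T > (0 : ℝ), ∀ t ≥ T,
        ∀ v : Vec nx, v ≠ 0 → 0 < grammian h φ u x₀ t T v v) →
      WeaklyPersistentAt h φ u x₀) ∧
    (WeaklyPersistentAtFS h φ u x₀ →
      ∃ T > (0 : ℝ), ∀ t ≥ T,
        ∀ v : Vec nx, v ≠ 0 → 0 < grammian h φ u x₀ t T v v) := by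
  constructor
  · -- Grammian positive definite ⟹ weakly persistent
    rintro ⟨T, hT, hPD⟩
    refine ⟨T, hT, fun t ht => ?_⟩
    have hF : ContDiff ℝ 2 (fun p : Vec nx × Vec nx => cumError h φ u (t - T) t p.1 p.2) :=
      hC2 T hT t ht
    have htT : t - T ≤ t := by linarith
    set xb := φ (t - T) 0 x₀ with hxb
    obtain ⟨B, hBdef⟩ : ∃ B, B = fderiv ℝ (fderiv ℝ
      (fun p : Vec nx × Vec nx => cumError h φ u (t - T) t p.1 p.2)) := ⟨_, rfl⟩
    have hQpos : ∀ v : Vec nx, v ≠ 0 →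
        0 < B (xb, xb) ((0 : Vec nx), v) ((0 : Vec nx), v) := by
      intro v hv
      have h1 := hPD t ht v hv
      unfold grammian at h1
      rw [grammian_eq' h φ u (t - T) t hF (φ (t - T) 0 x₀) v] at h1
      rw [← hxb, ← hBdef] at h1
      linarith
    obtain ⟨lam, hlam, hQlow⟩ :
        ∃ lam > (0 : ℝ), ∀ v : Vec nx,
          lam * ‖v‖ ^ 2 ≤ B (xb, xb) ((0 : Vec nx), v) ((0 : Vec nx), v) := by
      rcases subsingleton_or_nontrivial (Vec nx) with hss | hnt
      · refine ⟨1, one_pos, fun v => ?_⟩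
        have hv0 : v = 0 := Subsingleton.elim v 0
        subst hv0
        simp [Prod.mk_zero_zero]
      · have hc2 : Continuous fun v : Vec nx => (((0 : Vec nx), v) : Vec nx × Vec nx) :=
          continuous_const.prodMk continuous_id
        have hQc : Continuous fun v : Vec nx => B (xb, xb) ((0 : Vec nx), v) ((0 : Vec nx), v) :=
          ((B (xb, xb)).continuous.comp hc2).clm_apply hc2
        have hsne : (sphere (0 : Vec nx) 1).Nonempty :=
          NormedSpace.sphere_nonempty.mpr zero_le_one
        obtain ⟨v₀, hv₀S, hv₀min⟩ :=
          (isCompact_sphere (0 : Vec nx) 1).exists_isMinOn hsne hQc.continuousOn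
        have hv₀n : ‖v₀‖ = 1 := mem_sphere_zero_iff_norm.mp hv₀S
        have hv₀0 : v₀ ≠ 0 := by
          intro hh0; rw [hh0] at hv₀n; simp at hv₀n
        refine ⟨B (xb, xb) ((0 : Vec nx), v₀) ((0 : Vec nx), v₀), hQpos v₀ hv₀0, fun v => ?_⟩
        rcases eq_or_ne v 0 with rfl | hv
        · simp [Prod.mk_zero_zero]
        · have hnv : (0 : ℝ) < ‖v‖ := norm_pos_iff.mpr hv
          set vh := ‖v‖⁻¹ • v with hvh
          have hvhS : vh ∈ sphere (0 : Vec nx) 1 := by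
            rw [mem_sphere_zero_iff_norm, hvh, norm_smul]
            simp [abs_of_pos (inv_pos.mpr hnv), inv_mul_cancel₀ hnv.ne']
          have hmin := hv₀min hvhS
          have hsc : (((0 : Vec nx), v) : Vec nx × Vec nx) = ‖v‖ • ((0 : Vec nx), vh) := by
            rw [hvh]
            simp [Prod.ext_iff, smul_smul, mul_inv_cancel₀ hnv.ne']
          have hB2 : B (xb, xb) ((0 : Vec nx), v) ((0 : Vec nx), v)
              = ‖v‖ ^ 2 * B (xb, xb) ((0 : Vec nx), vh) ((0 : Vec nx), vh) := by
            rw [hsc]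
            simp only [_root_.map_smul, ContinuousLinearMap.smul_apply, smul_eq_mul]
            ring
          rw [hB2]
          have hmin' : B (xb, xb) ((0 : Vec nx), v₀) ((0 : Vec nx), v₀)
              ≤ B (xb, xb) ((0 : Vec nx), vh) ((0 : Vec nx), vh) := hv₀min hvhS
          nlinarith [sq_nonneg ‖v‖, hmin']
    have hBcont : Continuous B := by
      rw [hBdef]
      exact (hF.fderiv_right (m := 1) (le_refl 2)).continuous_fderiv one_ne_zero
    obtain ⟨R, hR, hball⟩ : ∃ R > (0 : ℝ), ∀ p : Vec nx × Vec nx,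
        dist p (xb, xb) ≤ R → ‖B p - B (xb, xb)‖ < lam / 2 := by
      obtain ⟨δ, hδ, hd⟩ := (Metric.continuousAt_iff (f := B) (a := (xb, xb))).mp hBcont.continuousAt (lam / 2)
        (by linarith)
      refine ⟨δ / 2, by linarith, fun p hp => ?_⟩
      have := hd (show dist p (xb, xb) < δ by linarith)
      exact (dist_eq_norm (B p) (B (xb, xb))).symm.trans_lt this
    refine ⟨R, hR, fun s => lam / 4 * s ^ 2,
      ⟨(continuous_const.mul (continuous_pow 2)).continuousOn, ?_, by norm_num⟩, ?_⟩
    · intro a ha b hb hab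
      simp only [Set.mem_Ici] at ha hb
      dsimp only
      nlinarith [mul_pos (sub_pos.mpr hab) (show (0:ℝ) < b + a by linarith), hlam]
    · intro ξ₁ hξ₁ ξ₂ hξ₂
      set δv := ξ₂ - ξ₁ with hδv
      have hkey : ∀ s ∈ Set.Icc (0 : ℝ) 1,
          lam / 2 * ‖δv‖ ^ 2 ≤
            B ((ξ₁, ξ₁) + s • ((0 : Vec nx), δv)) ((0 : Vec nx), δv) ((0 : Vec nx), δv) := by
        intro s hs
        have hmem2 : ξ₁ + s • δv ∈ closedBall xb R := by
          have hcomb : ξ₁ + s • δv = (1 - s) • ξ₁ + s • ξ₂ := by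
            rw [hδv, smul_sub, sub_smul, one_smul]
            abel
          rw [hcomb]
          exact (convex_closedBall xb R) hξ₁ hξ₂ (by linarith [hs.1, hs.2]) hs.1
            (by linarith [hs.2])
        have hdist : dist ((ξ₁, ξ₁ + s • δv) : Vec nx × Vec nx) (xb, xb) ≤ R := by
          rw [Prod.dist_eq]
          exact max_le (mem_closedBall.mp hξ₁) (mem_closedBall.mp hmem2)
        have hop := hball _ hdist
        have hw : ‖(((0 : Vec nx), δv) : Vec nx × Vec nx)‖ = ‖δv‖ := by
          simp [Prod.norm_def]
        have hlow := hQlow δv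
        have h1 := ((B (ξ₁, ξ₁ + s • δv) - B (xb, xb)) ((0 : Vec nx), δv)).le_opNorm
          (((0 : Vec nx), δv) : Vec nx × Vec nx)
        have h2 := (B (ξ₁, ξ₁ + s • δv) - B (xb, xb)).le_opNorm
          (((0 : Vec nx), δv) : Vec nx × Vec nx)
        rw [hw] at h1 h2
        have habs : |((B (ξ₁, ξ₁ + s • δv) - B (xb, xb)) ((0 : Vec nx), δv)) ((0 : Vec nx), δv)|
            ≤ lam / 2 * ‖δv‖ ^ 2 := by
          rw [← Real.norm_eq_abs]
          nlinarith [norm_nonneg (((B (ξ₁, ξ₁ + s • δv) - B (xb, xb)) ((0 : Vec nx), δv))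
            ((0 : Vec nx), δv)), norm_nonneg ((B (ξ₁, ξ₁ + s • δv) - B (xb, xb))
            ((0 : Vec nx), δv)), norm_nonneg δv, hop.le,
            norm_nonneg (B (ξ₁, ξ₁ + s • δv) - B (xb, xb))]
        have hsplit : B (ξ₁, ξ₁ + s • δv) ((0 : Vec nx), δv) ((0 : Vec nx), δv)
            = B (xb, xb) ((0 : Vec nx), δv) ((0 : Vec nx), δv)
              + ((B (ξ₁, ξ₁ + s • δv) - B (xb, xb)) ((0 : Vec nx), δv)) ((0 : Vec nx), δv) := by
          simp [ContinuousLinearMap.sub_apply]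
        rw [prod_line_eq', hsplit]
        have := (abs_le.mp habs).1
        linarith
      have hg1 := fun s => curve_deriv1'
        (fun p : Vec nx × Vec nx => cumError h φ u (t - T) t p.1 p.2) hF (ξ₁, ξ₁)
        ((0 : Vec nx), δv) s
      have hg2 := fun s => curve_deriv2'
        (fun p : Vec nx × Vec nx => cumError h φ u (t - T) t p.1 p.2) hF (ξ₁, ξ₁)
        ((0 : Vec nx), δv) s
      simp only [← hBdef] at hg2
      have h0 : (fun p : Vec nx × Vec nx => cumError h φ u (t - T) t p.1 p.2)
          ((ξ₁, ξ₁) + (0 : ℝ) • ((0 : Vec nx), δv)) = 0 := by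
        rw [prod_line_eq', show ξ₁ + (0 : ℝ) • δv = ξ₁ from by simp]
        exact cumError_self' h φ u _ _ ξ₁
      have hnn : ∀ s : ℝ, 0 ≤ (fun p : Vec nx × Vec nx => cumError h φ u (t - T) t p.1 p.2)
          ((ξ₁, ξ₁) + s • ((0 : Vec nx), δv)) :=
        fun s => cumError_nonneg' h φ u htT _ _
      have h1' : fderiv ℝ (fun p : Vec nx × Vec nx => cumError h φ u (t - T) t p.1 p.2)
          ((ξ₁, ξ₁) + (0 : ℝ) • ((0 : Vec nx), δv)) ((0 : Vec nx), δv) = 0 :=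
        deriv_zero_of_min' hg1 h0 hnn
      have hmain := quad_lower_bound' hg1 hg2 h0 h1' zero_le_one hkey
      rw [show ‖ξ₁ - ξ₂‖ = ‖δv‖ from by rw [hδv, norm_sub_rev]]
      have hmain' := hmain
      rw [prod_line_eq'] at hmain'
      have hpt : ξ₁ + (1 : ℝ) • δv = ξ₂ := by rw [one_smul, hδv]; abel
      rw [hpt] at hmain'
      have hfin : lam / 2 * ‖δv‖ ^ 2 / 2 * 1 ^ 2 ≤ cumError h φ u (t - T) t ξ₁ ξ₂ := hmain'
      nlinarith [hfin]
  · -- weakly persistent with finite sensitivity ⟹ Grammian positive definite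
    rintro ⟨T, hT, hWP⟩
    refine ⟨T, hT, fun t ht v hv => ?_⟩
    obtain ⟨R, hR, κ, hκK, ⟨r, hr, c, hc, hcs⟩, hbound⟩ := hWP t ht
    have hF : ContDiff ℝ 2 (fun p : Vec nx × Vec nx => cumError h φ u (t - T) t p.1 p.2) :=
      hC2 T hT t ht
    have htT : t - T ≤ t := by linarith
    set xb := φ (t - T) 0 x₀ with hxb
    obtain ⟨B, hBdef⟩ : ∃ B, B = fderiv ℝ (fderiv ℝ
      (fun p : Vec nx × Vec nx => cumError h φ u (t - T) t p.1 p.2)) := ⟨_, rfl⟩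
    have hnv : (0 : ℝ) < ‖v‖ := norm_pos_iff.mpr hv
    have hg1 := fun s => curve_deriv1'
      (fun p : Vec nx × Vec nx => cumError h φ u (t - T) t p.1 p.2) hF (xb, xb)
      ((0 : Vec nx), v) s
    have hg2 := fun s => curve_deriv2'
      (fun p : Vec nx × Vec nx => cumError h φ u (t - T) t p.1 p.2) hF (xb, xb)
      ((0 : Vec nx), v) s
    simp only [← hBdef] at hg2
    have h0 : (fun p : Vec nx × Vec nx => cumError h φ u (t - T) t p.1 p.2)
        ((xb, xb) + (0 : ℝ) • ((0 : Vec nx), v)) = 0 := by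
      rw [prod_line_eq', show xb + (0 : ℝ) • v = xb from by simp]
      exact cumError_self' h φ u _ _ xb
    have hnn : ∀ s : ℝ, 0 ≤ (fun p : Vec nx × Vec nx => cumError h φ u (t - T) t p.1 p.2)
        ((xb, xb) + s • ((0 : Vec nx), v)) :=
      fun s => cumError_nonneg' h φ u htT _ _
    have h1' : fderiv ℝ (fun p : Vec nx × Vec nx => cumError h φ u (t - T) t p.1 p.2)
        ((xb, xb) + (0 : ℝ) • ((0 : Vec nx), v)) ((0 : Vec nx), v) = 0 :=
      deriv_zero_of_min' hg1 h0 hnn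
    have hglow : ∀ s : ℝ, 0 < s → s * ‖v‖ ≤ R → s * ‖v‖ ≤ r →
        c * ‖v‖ ^ 2 * s ^ 2 ≤ (fun p : Vec nx × Vec nx => cumError h φ u (t - T) t p.1 p.2)
          ((xb, xb) + s • ((0 : Vec nx), v)) := by
      intro s hs hsR hsr
      have hmem1 : xb ∈ closedBall xb R := mem_closedBall_self hR.le
      have hmem2 : xb + s • v ∈ closedBall xb R := by
        rw [mem_closedBall, dist_eq_norm]
        have : ‖xb + s • v - xb‖ = s * ‖v‖ := by
          simp [norm_smul, abs_of_pos hs]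
        rw [this]; exact hsR
      have hb := hbound xb hmem1 (xb + s • v) hmem2
      have hnrm : ‖xb - (xb + s • v)‖ = s * ‖v‖ := by
        have : xb - (xb + s • v) = -(s • v) := by abel
        rw [this, norm_neg, norm_smul, Real.norm_eq_abs, abs_of_pos hs]
      rw [hnrm] at hb
      have hσ : 0 < s * ‖v‖ := mul_pos hs hnv
      have hdiv := hcs (s * ‖v‖) hσ hsr
      have hk : c * (s * ‖v‖) ^ 2 ≤ κ (s * ‖v‖) := by
        rw [le_div_iff₀ (by positivity)] at hdiv
        linarith
      have hgs : (fun p : Vec nx × Vec nx => cumError h φ u (t - T) t p.1 p.2)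
          ((xb, xb) + s • ((0 : Vec nx), v)) = cumError h φ u (t - T) t xb (xb + s • v) := by
        rw [prod_line_eq']
      rw [hgs]
      nlinarith [hb, hk]
    have hg20 : 2 * (c * ‖v‖ ^ 2) ≤
        B ((xb, xb) + (0 : ℝ) • ((0 : Vec nx), v)) ((0 : Vec nx), v) ((0 : Vec nx), v) := by
      apply le_of_forall_pos_le_add
      intro ε hε
      have hcont : Continuous (fun s : ℝ =>
          B ((xb, xb) + s • ((0 : Vec nx), v)) ((0 : Vec nx), v) ((0 : Vec nx), v)) := by
        have := curve_cont2' (fun p : Vec nx × Vec nx => cumError h φ u (t - T) t p.1 p.2) hF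
          (xb, xb) ((0 : Vec nx), v)
        rw [← hBdef] at this
        exact this
      obtain ⟨η, hη, hηp⟩ := Metric.continuousAt_iff.mp hcont.continuousAt ε hε
      set b := min (η / 2) (min (R / ‖v‖) (r / ‖v‖)) with hbdef
      have hb0 : 0 < b :=
        lt_min (by linarith) (lt_min (by positivity) (by positivity))
      have hupper : ∀ s ∈ Set.Icc (0 : ℝ) b,
          B ((xb, xb) + s • ((0 : Vec nx), v)) ((0 : Vec nx), v) ((0 : Vec nx), v) ≤
            B ((xb, xb) + (0 : ℝ) • ((0 : Vec nx), v)) ((0 : Vec nx), v) ((0 : Vec nx), v)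
              + ε := by
        intro s hs
        have hd : dist s 0 < η := by
          rw [Real.dist_eq, sub_zero, abs_of_nonneg hs.1]
          have hb1 : b ≤ η / 2 := min_le_left _ _
          linarith [hs.2]
        have := hηp hd
        rw [Real.dist_eq] at this
        linarith [(abs_lt.mp this).1, (abs_lt.mp this).2]
      have hub := quad_upper_bound' hg1 hg2 h0 h1' hb0.le hupper
      have hbR : b * ‖v‖ ≤ R := by
        have : b ≤ R / ‖v‖ := le_trans (min_le_right _ _) (min_le_left _ _)
        rw [le_div_iff₀ hnv] at this
        exact this
      have hbr : b * ‖v‖ ≤ r := by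
        have : b ≤ r / ‖v‖ := le_trans (min_le_right _ _) (min_le_right _ _)
        rw [le_div_iff₀ hnv] at this
        exact this
      have hlb := hglow b hb0 hbR hbr
      nlinarith [hub, hlb, mul_pos hb0 hb0]
    unfold grammian
    rw [grammian_eq' h φ u (t - T) t hF (φ (t - T) 0 x₀) v]
    rw [← hxb, ← hBdef]
    simp only [zero_smul, add_zero] at hg20
    have hpos : (0 : ℝ) < c * ‖v‖ ^ 2 := by positivity
    linarith
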